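/- arXiv:2411.09079 — 2 statements merged into one kernel-verified Lean document; each statement's English description precedes it below -/
import Mathlib

section
/- For every natural number l there exists a constant C₀ > 0, depending only on l, μ and K, such that for every λ ≥ C₀·(T + T²), every t ∈ (0, T) and every x ∈ ℝ^N, the function v(t,x) = (λγ(t))^l·e^{2λα(t,x)} is differentiable in t and satisfies |∂ₜv(t,x)| ≤ C₀·λ^{l+2}·γ(t)^{l+2}·e^{2λα(t,x)}. -/
lemma stmt_10_key (lr A C₀ T lam γt : ℝ) (hl0 : 0 ≤ lr) (hA1 : 1 ≤ A)
    (hC₀def : C₀ = lr + 4 * A + 1) (hT : 0 < T) (hγ0 : 0 < γt) (hγT : 4 ≤ γt * T ^ 2)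
    (hlam0 : 0 < lam) (hlam : C₀ * (T + T ^ 2) ≤ lam) :
    lr * T + 2 * A * T * lam * γt ≤ C₀ * (lam ^ 2 * γt) := by
  have hC1 : 1 ≤ C₀ := by nlinarith
  have hC0 : 0 < C₀ := by linarith
  have hCl : lr ≤ C₀ := by nlinarith
  have hCA : 4 * A ≤ C₀ := by nlinarith
  have h1 : C₀ * T ≤ lam := by nlinarith [sq_nonneg T]
  have h2 : C₀ * T ^ 2 ≤ lam := by nlinarith
  have h3 : 4 * C₀ ^ 2 * T ≤ lam ^ 2 * γt := by
    have e1 : (C₀ * T) * (C₀ * T ^ 2) ≤ lam * lam :=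
      mul_le_mul h1 h2 (by positivity) hlam0.le
    have e1' : C₀ ^ 2 * T ^ 3 ≤ lam ^ 2 := by nlinarith
    have e3 : C₀ ^ 2 * T ^ 3 * γt ≤ lam ^ 2 * γt :=
      mul_le_mul_of_nonneg_right e1' hγ0.le
    have e4 : (C₀ ^ 2 * T) * 4 ≤ (C₀ ^ 2 * T) * (γt * T ^ 2) :=
      mul_le_mul_of_nonneg_left hγT (by positivity)
    nlinarith
  have hC3 : lr ≤ 2 * C₀ ^ 3 := by nlinarith [sq_nonneg (C₀ - 1), mul_pos hC0 hC0]
  have h4 : lr * T ≤ 2 * C₀ ^ 3 * T := mul_le_mul_of_nonneg_right hC3 hT.le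
  have h5 : 2 * C₀ ^ 3 * T ≤ (C₀ / 2) * (lam ^ 2 * γt) := by
    have e := mul_le_mul_of_nonneg_left h3 (by positivity : (0:ℝ) ≤ C₀ / 2)
    linarith
  have h6 : 4 * A * T ≤ C₀ * lam := by nlinarith
  have h7 : 2 * A * T * lam * γt ≤ (C₀ / 2) * (lam ^ 2 * γt) := by
    have e := mul_le_mul_of_nonneg_right h6 (mul_pos hlam0 hγ0).le
    nlinarith [e]
  linarith

lemma stmt_10_aux (l : ℕ) (A T lam t a : ℝ) (hA1 : 1 ≤ A)
    (hT : 0 < T) (hlam : ((l : ℝ) + 4 * A + 1) * (T + T ^ 2) ≤ lam)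
    (ht0 : 0 < t) (htT : t < T) (ha : |a| ≤ A) :
    ∃ d : ℝ,
      HasDerivAt (fun s : ℝ => (lam * (1 / (s * (T - s)))) ^ l *
          Real.exp (2 * lam * (a * (1 / (s * (T - s)))))) d t ∧
      |d| ≤ ((l : ℝ) + 4 * A + 1) * lam ^ (l + 2) * (1 / (t * (T - t))) ^ (l + 2) *
          Real.exp (2 * lam * (a * (1 / (t * (T - t))))) := by
  obtain ⟨C₀, hC₀def⟩ : ∃ c : ℝ, c = (l : ℝ) + 4 * A + 1 := ⟨_, rfl⟩
  rw [← hC₀def]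
  have hl0 : (0:ℝ) ≤ (l:ℝ) := Nat.cast_nonneg l
  have hC1 : 1 ≤ C₀ := by nlinarith
  have hCl : (l : ℝ) ≤ C₀ := by nlinarith
  have hCA : 4 * A ≤ C₀ := by nlinarith
  have hC0 : 0 < C₀ := by linarith
  have hg : 0 < t * (T - t) := mul_pos ht0 (by linarith)
  have hlam0 : 0 < lam := lt_of_lt_of_le (by nlinarith) hlam
  obtain ⟨γt, hγdef⟩ : ∃ c : ℝ, c = 1 / (t * (T - t)) := ⟨_, rfl⟩
  rw [← hγdef]
  have hγ0 : 0 < γt := by rw [hγdef]; positivity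
  have hγg : γt * (t * (T - t)) = 1 := by
    rw [hγdef, one_div, inv_mul_cancel₀ (ne_of_gt hg)]
  have hA0 : 0 ≤ A := by linarith
  -- derivative of g(s) = s*(T-s)
  have hG : HasDerivAt (fun s : ℝ => s * (T - s)) (T - 2 * t) t := by
    have h := (hasDerivAt_id t).fun_mul ((hasDerivAt_const t T).fun_sub (hasDerivAt_id t))
    refine h.congr_deriv ?_
    simp [id_eq]
    ring
  have hU : HasDerivAt (fun s : ℝ => 1 / (s * (T - s))) ((2 * t - T) / (t * (T - t)) ^ 2) t := by
    have h := hG.fun_inv (ne_of_gt hg)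
    simpa [one_div] using h
  obtain ⟨u', hu'def⟩ : ∃ c : ℝ, c = (2 * t - T) / (t * (T - t)) ^ 2 := ⟨_, rfl⟩
  rw [← hu'def] at hU
  obtain ⟨z, hzdef⟩ : ∃ c : ℝ, c = lam * γt := ⟨_, rfl⟩
  have hz0 : 0 < z := by rw [hzdef]; exact mul_pos hlam0 hγ0
  have hP : HasDerivAt (fun s : ℝ => (lam * (1 / (s * (T - s)))) ^ l)
      ((l : ℝ) * z ^ (l - 1) * (lam * u')) t := by
    rw [hzdef, hγdef]
    exact (hU.const_mul lam).pow l
  obtain ⟨E, hEdef⟩ : ∃ c : ℝ, c = Real.exp (2 * lam * (a * γt)) := ⟨_, rfl⟩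
  rw [← hEdef]
  have hE0 : 0 < E := hEdef ▸ Real.exp_pos _
  have hEx : HasDerivAt (fun s : ℝ => Real.exp (2 * lam * (a * (1 / (s * (T - s))))))
      (E * (2 * lam * (a * u'))) t := by
    rw [hEdef, hγdef]
    exact ((hU.const_mul a).const_mul (2 * lam)).exp
  refine ⟨_, hP.mul hEx, ?_⟩
  clear hP hEx hU hG
  have hev : Real.exp (2 * lam * (a * (1 / (t * (T - t))))) = E := by rw [hEdef, hγdef]
  have hpv : (lam * (1 / (t * (T - t)))) ^ l = z ^ l := by rw [hzdef, hγdef]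
  rw [hev, hpv]
  -- bound
  have habsu : |u'| ≤ T * γt ^ 2 := by
    rw [hu'def, abs_div]
    have h1 : |2 * t - T| ≤ T := by rw [abs_le]; constructor <;> linarith
    have h2 : |(t * (T - t)) ^ 2| = (t * (T - t)) ^ 2 := abs_of_pos (by positivity)
    rw [h2, div_le_iff₀ (by positivity)]
    have h3 : γt ^ 2 * (t * (T - t)) ^ 2 = 1 := by
      rw [← mul_pow, hγg, one_pow]
    nlinarith
  have hγT : 4 ≤ γt * T ^ 2 := by
    have h1 : 4 * (t * (T - t)) ≤ T ^ 2 := by nlinarith [sq_nonneg (T - 2 * t)]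
    nlinarith
  -- key scalar inequality
  have hlam' : C₀ * (T + T ^ 2) ≤ lam := by rw [hC₀def]; exact hlam
  have hkey : (l : ℝ) * T + 2 * A * T * lam * γt ≤ C₀ * (lam ^ 2 * γt) :=
    stmt_10_key (l : ℝ) A C₀ T lam γt hl0 hA1 hC₀def hT hγ0 hγT hlam0 hlam'
  have hT1 : |((l : ℝ) * z ^ (l - 1) * (lam * u')) * E| ≤ (l : ℝ) * z ^ l * γt * T * E := by
    have hc : (0:ℝ) ≤ (l : ℝ) * z ^ (l - 1) * lam * E := by positivity
    have heq : ((l : ℝ) * z ^ (l - 1) * (lam * u')) * E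
        = ((l : ℝ) * z ^ (l - 1) * lam * E) * u' := by ring
    rw [heq, abs_mul, abs_of_nonneg hc]
    calc ((l : ℝ) * z ^ (l - 1) * lam * E) * |u'|
        ≤ ((l : ℝ) * z ^ (l - 1) * lam * E) * (T * γt ^ 2) :=
          mul_le_mul_of_nonneg_left habsu hc
      _ = (l : ℝ) * (z ^ (l - 1) * z) * γt * T * E := by
          rw [hzdef]; ring
      _ = (l : ℝ) * z ^ l * γt * T * E := by
          rcases Nat.eq_zero_or_pos l with h | h
          · simp [h]
          · rw [← pow_succ, Nat.sub_add_cancel h]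
  have hT2 : |z ^ l * (E * (2 * lam * (a * u')))| ≤ z ^ l * E * 2 * lam * (A * (T * γt ^ 2)) := by
    have hc : (0:ℝ) ≤ z ^ l * E * 2 * lam := by positivity
    have heq : z ^ l * (E * (2 * lam * (a * u'))) = (z ^ l * E * 2 * lam) * (a * u') := by ring
    rw [heq, abs_mul, abs_of_nonneg hc, abs_mul]
    apply mul_le_mul_of_nonneg_left _ hc
    exact mul_le_mul ha habsu (abs_nonneg _) hA0
  have hzpow : z ^ l = lam ^ l * γt ^ l := by rw [hzdef, mul_pow]
  calc |(l : ℝ) * z ^ (l - 1) * (lam * u') * E + z ^ l * (E * (2 * lam * (a * u')))|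
      ≤ |((l : ℝ) * z ^ (l - 1) * (lam * u')) * E| + |z ^ l * (E * (2 * lam * (a * u')))| :=
        abs_add_le _ _
    _ ≤ (l : ℝ) * z ^ l * γt * T * E + z ^ l * E * 2 * lam * (A * (T * γt ^ 2)) := by
        linarith
    _ = (((l : ℝ) * T + 2 * A * T * lam * γt) * γt) * (z ^ l * E) := by ring
    _ ≤ ((C₀ * (lam ^ 2 * γt)) * γt) * (z ^ l * E) := by
        apply mul_le_mul_of_nonneg_right _ (by positivity)
        exact mul_le_mul_of_nonneg_right hkey (le_of_lt hγ0)
    _ = C₀ * lam ^ (l + 2) * γt ^ (l + 2) * E := by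
        rw [hzpow]; ring

/-- For every natural number `l` there exists a constant `C₀ > 0`, depending only on
`l`, `μ` and `K`, such that for every `λ ≥ C₀·(T + T²)`, every `t ∈ (0, T)` and every
`x ∈ ℝ^N`, the function `v(t,x) = (λγ(t))^l·e^{2λα(t,x)}` is differentiable in `t` and
satisfies `|∂ₜv(t,x)| ≤ C₀·λ^{l+2}·γ(t)^{l+2}·e^{2λα(t,x)}`. -/
theorem stmt_10 (N : ℕ) (hN : 1 ≤ N)
    (ψ : EuclideanSpace ℝ (Fin N) → ℝ) (K : ℝ)
    (hbd : BddAbove (Set.range fun x => |ψ x|)) (hK : K = ⨆ x, |ψ x|)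
    (μ : ℝ) (hμ : 1 ≤ μ) (l : ℕ) :
    ∃ C₀ > 0, ∀ T > (0 : ℝ), ∀ lam : ℝ, C₀ * (T + T ^ 2) ≤ lam →
      ∀ t ∈ Set.Ioo (0 : ℝ) T, ∀ x : EuclideanSpace ℝ (Fin N),
        ∃ d : ℝ,
          HasDerivAt (fun s : ℝ => (lam * (1 / (s * (T - s)))) ^ l *
              Real.exp (2 * lam *
                ((Real.exp (μ * ψ x) - Real.exp (2 * μ * K)) * (1 / (s * (T - s)))))) d t ∧
          |d| ≤ C₀ * lam ^ (l + 2) * (1 / (t * (T - t))) ^ (l + 2) *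
              Real.exp (2 * lam *
                ((Real.exp (μ * ψ x) - Real.exp (2 * μ * K)) * (1 / (t * (T - t))))) := by
  have hK0 : 0 ≤ K := by
    have h := le_ciSup hbd (0 : EuclideanSpace ℝ (Fin N))
    rw [← hK] at h
    exact le_trans (abs_nonneg _) h
  have hA1 : 1 ≤ Real.exp (2 * μ * K) := Real.one_le_exp (by positivity)
  refine ⟨(l : ℝ) + 4 * Real.exp (2 * μ * K) + 1, by positivity, ?_⟩
  intro T hT lam hlam t ht x
  obtain ⟨ht0, htT⟩ := ht
  have hψ : ψ x ≤ K := by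
    have h := le_ciSup hbd x
    rw [← hK] at h
    exact le_trans (le_abs_self _) h
  have ha : |Real.exp (μ * ψ x) - Real.exp (2 * μ * K)| ≤ Real.exp (2 * μ * K) := by
    rw [abs_le]
    constructor
    · have := Real.exp_pos (μ * ψ x); linarith
    · have h1 : Real.exp (μ * ψ x) ≤ Real.exp (2 * μ * K) := by
        apply Real.exp_le_exp.2
        nlinarith
      linarith
  exact stmt_10_aux l (Real.exp (2 * μ * K)) T lam t _ hA1 hT hlam ht0 htT ha
end

section
/- Suppose in addition that ψ is continuously differentiable with K₁ = sup_{x∈ℝ^N} ‖∇ψ(x)‖ < ∞, and that ξ : ℝ^N → ℝ is continuously differentiable with 0 ≤ ξ ≤ 1 and ‖∇ξ(x)‖ ≤ M·√(ξ(x)) for all x and some constant M > 0. Then for every natural number l there exists a constant C₀ > 0, depending only on l, μ, K, K₁ and M, such that for every λ ≥ C₀·(T + T²), every t ∈ (0, T) and every x ∈ ℝ^N, the spatial gradient of x ↦ v(t,x)·ξ(x) satisfies ‖∇ₓ(v(t,x)·ξ(x))‖ ≤ C₀·λ^{l+1}·γ(t)^{l+1}·e^{2λα(t,x)}·√(ξ(x)).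 -/
set_option maxHeartbeats 1000000

lemma norm_gradient_eq' {N : ℕ} (f : EuclideanSpace ℝ (Fin N) → ℝ) (x : EuclideanSpace ℝ (Fin N)) :
    ‖gradient f x‖ = ‖fderiv ℝ f x‖ := by
  rw [gradient]
  exact (InnerProductSpace.toDual ℝ _).symm.norm_map _


/-- Suppose `ψ` is `C¹` with bounded gradient, `K₁ = sup ‖∇ψ‖`, and `ξ` is `C¹` with
`0 ≤ ξ ≤ 1` and `‖∇ξ‖ ≤ M·√ξ`. Then for every `l` there is `C₀ > 0`, depending only on
`l`, `μ`, `K`, `K₁` and `M`, such that for `λ ≥ C₀·(T + T²)`, `t ∈ (0,T)` and `x`,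
`‖∇ₓ(v(t,x)·ξ(x))‖ ≤ C₀·λ^{l+1}·γ(t)^{l+1}·e^{2λα(t,x)}·√(ξ(x))`. -/
theorem stmt_11 (N : ℕ) (hN : 1 ≤ N)
    (ψ : EuclideanSpace ℝ (Fin N) → ℝ) (hψ : ContDiff ℝ 1 ψ) (K K₁ : ℝ)
    (hbd : BddAbove (Set.range fun x => |ψ x|)) (hK : K = ⨆ x, |ψ x|)
    (hbd₁ : BddAbove (Set.range fun x => ‖gradient ψ x‖))
    (hK₁ : K₁ = ⨆ x, ‖gradient ψ x‖)
    (μ : ℝ) (hμ : 1 ≤ μ)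
    (ξ : EuclideanSpace ℝ (Fin N) → ℝ) (hξ : ContDiff ℝ 1 ξ)
    (hξ01 : ∀ x, 0 ≤ ξ x ∧ ξ x ≤ 1)
    (M : ℝ) (hM : 0 < M)
    (hξgrad : ∀ x, ‖gradient ξ x‖ ≤ M * Real.sqrt (ξ x)) (l : ℕ) :
    ∃ C₀ > 0, ∀ T > (0 : ℝ), ∀ lam : ℝ, C₀ * (T + T ^ 2) ≤ lam →
      ∀ t ∈ Set.Ioo (0 : ℝ) T, ∀ x : EuclideanSpace ℝ (Fin N),
        ‖gradient (fun y => (lam * (1 / (t * (T - t)))) ^ l *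
            Real.exp (2 * lam *
              ((Real.exp (μ * ψ y) - Real.exp (2 * μ * K)) * (1 / (t * (T - t))))) * ξ y) x‖
          ≤ C₀ * lam ^ (l + 1) * (1 / (t * (T - t))) ^ (l + 1) *
              Real.exp (2 * lam *
                ((Real.exp (μ * ψ x) - Real.exp (2 * μ * K)) * (1 / (t * (T - t))))) *
              Real.sqrt (ξ x) := by
  have hK₁0 : 0 ≤ K₁ := by
    rw [hK₁]
    exact le_trans (norm_nonneg _) (le_ciSup hbd₁ 0)
  set C₀ : ℝ := 2 * μ * Real.exp (μ * K) * K₁ + M + 1 with hC₀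
  have hC₀1 : 1 ≤ C₀ := by
    have h1 : 0 ≤ 2 * μ * Real.exp (μ * K) * K₁ := by positivity
    nlinarith
  have hC₀pos : 0 < C₀ := lt_of_lt_of_le one_pos hC₀1
  refine ⟨C₀, hC₀pos, fun T hT lam hlam t ht x => ?_⟩
  obtain ⟨ht0, htT⟩ := ht
  have hden : 0 < t * (T - t) := mul_pos ht0 (by linarith)
  set g : ℝ := 1 / (t * (T - t)) with hg
  have hg0 : 0 < g := by positivity
  have hTT : 0 < T + T ^ 2 := by positivity
  have hlam0 : 0 < lam := lt_of_lt_of_le (by nlinarith) hlam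
  -- lam * g ≥ 1
  have hden_le : t * (T - t) ≤ T + T ^ 2 := by nlinarith
  have hA1 : 1 ≤ lam * g := by
    rw [hg, mul_one_div, le_div_iff₀ hden]
    nlinarith
  have hA0 : 0 < lam * g := by positivity
  -- derivative computation
  have hψ' : HasFDerivAt ψ (fderiv ℝ ψ x) x := (hψ.differentiable one_ne_zero x).hasFDerivAt
  have hξ' : HasFDerivAt ξ (fderiv ℝ ξ x) x := (hξ.differentiable one_ne_zero x).hasFDerivAt
  have h8 := (((((((hψ'.const_mul μ).exp).sub_const
      (Real.exp (2 * μ * K))).mul_const g).const_mul (2 * lam)).exp).const_mul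
      ((lam * g) ^ l)).mul hξ'
  rw [norm_gradient_eq', (show HasFDerivAt (fun y => (lam * g) ^ l * Real.exp (2 * lam * ((Real.exp (μ * ψ y) - Real.exp (2 * μ * K)) * g)) * ξ y) _ x from h8).fderiv]
  -- notation
  set c : ℝ := (lam * g) ^ l with hc
  set G : ℝ := Real.exp (2 * lam * ((Real.exp (μ * ψ x) - Real.exp (2 * μ * K)) * g)) with hG
  have hc0 : 0 < c := by positivity
  have hG0 : 0 < G := Real.exp_pos _
  have hξx0 : 0 ≤ ξ x := (hξ01 x).1
  have hS : Real.sqrt (ξ x) ≤ 1 := Real.sqrt_le_one.mpr (hξ01 x).2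
  have hS0 : 0 ≤ Real.sqrt (ξ x) := Real.sqrt_nonneg _
  have hξS : ξ x ≤ Real.sqrt (ξ x) := by
    nth_rewrite 1 [← Real.sq_sqrt hξx0]
    nlinarith
  have hnψ : ‖fderiv ℝ ψ x‖ ≤ K₁ := by
    rw [← norm_gradient_eq', hK₁]
    exact le_ciSup hbd₁ x
  have hnξ : ‖fderiv ℝ ξ x‖ ≤ M * Real.sqrt (ξ x) := by
    rw [← norm_gradient_eq']; exact hξgrad x
  have heψ : Real.exp (μ * ψ x) ≤ Real.exp (μ * K) := by
    apply Real.exp_le_exp.2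
    have : ψ x ≤ K := le_trans (le_abs_self _) (hK ▸ le_ciSup hbd x)
    nlinarith
  have heψ0 : (0:ℝ) < Real.exp (μ * ψ x) := Real.exp_pos _
  have hnψ0 : 0 ≤ ‖fderiv ℝ ψ x‖ := norm_nonneg _
  have hnξ0 : 0 ≤ ‖fderiv ℝ ξ x‖ := norm_nonneg _
  -- norm bound
  have step1 : ‖(c * G) • fderiv ℝ ξ x +
        ξ x • c • G • (2 * lam) • g • Real.exp (μ * ψ x) • μ • fderiv ℝ ψ x‖
      ≤ (c * G) * ‖fderiv ℝ ξ x‖ +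
        ξ x * (c * (G * (2 * lam * (g * (Real.exp (μ * ψ x) * (μ * ‖fderiv ℝ ψ x‖)))))) := by
    refine le_trans (norm_add_le _ _) ?_
    simp only [norm_smul, Real.norm_eq_abs]
    rw [abs_of_pos (by positivity : (0:ℝ) < c * G), abs_of_nonneg hξx0, abs_of_pos hc0,
      abs_of_pos hG0, abs_of_pos (by positivity : (0:ℝ) < 2 * lam), abs_of_pos hg0,
      abs_of_pos heψ0, abs_of_pos (by positivity : (0:ℝ) < μ)]
  refine le_trans step1 ?_
  set nψ := ‖fderiv ℝ ψ x‖
  set nξ := ‖fderiv ℝ ξ x‖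
  set S := Real.sqrt (ξ x)
  calc (c * G) * nξ + ξ x * (c * (G * (2 * lam * (g * (Real.exp (μ * ψ x) * (μ * nψ))))))
      ≤ (c * G) * (M * S) +
        S * (c * (G * (2 * lam * (g * (Real.exp (μ * K) * (μ * K₁)))))) := by
        have h1 : (c * G) * nξ ≤ (c * G) * (M * S) := by gcongr
        have h2 : ξ x * (c * (G * (2 * lam * (g * (Real.exp (μ * ψ x) * (μ * nψ))))))
            ≤ S * (c * (G * (2 * lam * (g * (Real.exp (μ * K) * (μ * K₁)))))) := by
          gcongr <;> first | positivity | assumption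
        linarith
    _ ≤ (c * G) * (lam * g) * (M * S) +
        S * (c * (G * (2 * lam * (g * (Real.exp (μ * K) * (μ * K₁)))))) := by
        have h3 : (c * G) * (M * S) ≤ (c * G) * (lam * g) * (M * S) := by
          have h4 : 0 ≤ c * G * (M * S) := by positivity
          nlinarith
        linarith
    _ = (c * (lam * g)) * G * S * (M + 2 * μ * Real.exp (μ * K) * K₁) := by ring
    _ ≤ (c * (lam * g)) * G * S * C₀ := by
        have h5 : M + 2 * μ * Real.exp (μ * K) * K₁ ≤ C₀ := by rw [hC₀]; linarith
        have h6 : 0 ≤ (c * (lam * g)) * G * S := by positivity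
        nlinarith
    _ = C₀ * lam ^ (l + 1) * g ^ (l + 1) * G * S := by
        rw [hc, ← pow_succ, mul_pow]
        ring
end
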